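/- The expected absorption time of the Moran process with mutant fitness r > 1 on a strongly connected Δ-regular n-vertex digraph is at most n²Δ. -/

import Mathlib

open Finset

/-- One-step transition probability of the Moran process with mutant fitness
`r` on the digraph `E`: a vertex `u` is chosen proportionally to its fitness,
then a uniformly random out-neighbour `v` of `u` is replaced by a copy of `u`. -/
noncomputable def moranP {V : Type*} [Fintype V] [DecidableEq V]
    (E : V → V → Prop) [DecidableRel E] (r : ℝ) (S S' : Finset V) : ℝ :=
  ∑ u : V, ∑ v ∈ univ.filter (fun v => E u v),
    if S' = (if u ∈ S then insert v S else S.erase v) then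
      (if u ∈ S then r else 1) /
        (((Fintype.card V : ℝ) + (r - 1) * S.card) *
          ((univ.filter (fun w => E u w)).card : ℝ))
    else 0

lemma moranP_sum_eval {V : Type*} [Fintype V] [DecidableEq V]
    (E : V → V → Prop) [DecidableRel E] (r : ℝ) (S : Finset V) (g : Finset V → ℝ) :
    ∑ S' : Finset V, moranP E r S S' * g S'
      = ∑ u : V, ∑ v ∈ univ.filter (fun v => E u v),
          ((if u ∈ S then r else 1) /
            (((Fintype.card V : ℝ) + (r - 1) * S.card) *
              ((univ.filter (fun w => E u w)).card : ℝ)))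
            * g (if u ∈ S then insert v S else S.erase v) := by
  unfold moranP
  simp only [Finset.sum_mul, ite_mul, zero_mul]
  rw [Finset.sum_comm]
  refine Finset.sum_congr rfl fun u _ => ?_
  rw [Finset.sum_comm]
  refine Finset.sum_congr rfl fun v _ => ?_
  simp [Finset.sum_ite_eq']

-- nonnegativity of the transition weights
lemma moranP_nonneg {V : Type*} [Fintype V] [DecidableEq V]
    (E : V → V → Prop) [DecidableRel E] {r : ℝ} (hr : 1 < r) (S S' : Finset V) :
    0 ≤ moranP E r S S' := by
  have hW : (0:ℝ) ≤ (Fintype.card V : ℝ) + (r - 1) * S.card := by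
    have : (0:ℝ) ≤ (r - 1) * S.card := by
      apply mul_nonneg <;> [linarith; positivity]
    positivity
  refine Finset.sum_nonneg fun u _ => Finset.sum_nonneg fun v _ => ?_
  have hd : (0:ℝ) ≤ ((Fintype.card V : ℝ) + (r - 1) * S.card) *
      ((univ.filter (fun w => E u w)).card : ℝ) := mul_nonneg hW (Nat.cast_nonneg _)
  split_ifs
  all_goals first
    | exact le_refl 0
    | exact div_nonneg (by linarith) hd

lemma weight_sum {V : Type*} [Fintype V] [DecidableEq V] (r : ℝ) (S : Finset V) :
    ∑ u : V, (if u ∈ S then r else 1)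
      = (Fintype.card V : ℝ) + (r - 1) * S.card := by
  have h : ∀ u : V, (if u ∈ S then r else (1:ℝ))
      = (if u ∈ S then r - 1 else 0) + 1 := by
    intro u; split <;> ring
  simp_rw [h]
  rw [Finset.sum_add_distrib, Finset.sum_ite_mem, univ_inter,
    Finset.sum_const, Finset.sum_const, card_univ, nsmul_eq_mul, nsmul_eq_mul]
  ring

lemma moranP_sum_one {V : Type*} [Fintype V] [DecidableEq V] [Nonempty V]
    (E : V → V → Prop) [DecidableRel E] {r : ℝ} (hr : 1 < r) {Δ : ℕ} (hΔ : 1 ≤ Δ)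
    (hout : ∀ v : V, (univ.filter (fun w => E v w)).card = Δ) (S : Finset V) :
    ∑ S' : Finset V, moranP E r S S' = 1 := by
  have hW : (0:ℝ) < (Fintype.card V : ℝ) + (r - 1) * S.card := by
    have h1 : (1:ℝ) ≤ (Fintype.card V : ℝ) := by
      exact_mod_cast Fintype.card_pos
    have : (0:ℝ) ≤ (r - 1) * S.card := by
      apply mul_nonneg <;> [linarith; positivity]
    linarith
  have hΔ' : (0:ℝ) < (Δ : ℕ) := by exact_mod_cast hΔ
  have key := moranP_sum_eval E r S (fun _ => 1)
  simp only [mul_one] at key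
  rw [key]
  have h2 : ∀ u : V, ∑ _v ∈ univ.filter (fun v => E u v),
      ((if u ∈ S then r else 1) /
        (((Fintype.card V : ℝ) + (r - 1) * S.card) *
          ((univ.filter (fun w => E u w)).card : ℝ)))
      = (if u ∈ S then r else 1) * (1 / ((Fintype.card V : ℝ) + (r - 1) * S.card)) := by
    intro u
    rw [Finset.sum_const, hout u, nsmul_eq_mul]
    field_simp
  rw [Finset.sum_congr rfl fun u _ => h2 u, ← Finset.sum_mul, weight_sum]
  field_simp

lemma double_count {V : Type*} [Fintype V] [DecidableEq V]
    (E : V → V → Prop) [DecidableRel E] (S : Finset V) :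
    ∑ u : V, ((univ.filter (fun v => E u v)).filter (fun v => v ∈ S)).card
      = ∑ v ∈ S, (univ.filter (fun u => E u v)).card := by
  simp only [Finset.filter_filter, Finset.card_filter]
  rw [Finset.sum_comm]
  have h : ∀ v : V, (∑ u : V, if E u v ∧ v ∈ S then (1:ℕ) else 0)
      = if v ∈ S then ∑ u : V, if E u v then (1:ℕ) else 0 else 0 := by
    intro v; by_cases hv : v ∈ S <;> simp [hv]
  rw [Finset.sum_congr rfl fun v _ => h v, Finset.sum_ite_mem]
  simp

noncomputable def ee (r : ℝ) (n : ℕ) (j : ℕ) : ℝ :=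
  (n : ℝ) * r⁻¹ ^ j - ∑ i ∈ range j, r⁻¹ ^ i

noncomputable def pot (r : ℝ) (n Δ : ℕ) (k : ℕ) : ℝ :=
  (n : ℝ) * Δ * ∑ j ∈ range k, ee r n j

lemma ee_rec {r : ℝ} (hr : 1 < r) (n : ℕ) (j : ℕ) :
    r * ee r n (j + 1) = ee r n j - r := by
  have hr0 : r ≠ 0 := by linarith
  have hterm : ∀ i : ℕ, r * r⁻¹ ^ (i + 1) = r⁻¹ ^ i := by
    intro i
    rw [pow_succ, mul_comm (r⁻¹ ^ i) r⁻¹, ← mul_assoc, mul_inv_cancel₀ hr0, one_mul]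
  have e2 : r * (∑ i ∈ range (j + 1), r⁻¹ ^ i)
      = (∑ i ∈ range j, r⁻¹ ^ i) + r := by
    rw [Finset.sum_range_succ', mul_add, Finset.mul_sum]
    simp only [hterm, pow_zero, mul_one]
  have e1 : r * ((n : ℝ) * r⁻¹ ^ (j + 1)) = (n : ℝ) * r⁻¹ ^ j := by
    rw [mul_left_comm, hterm]
  unfold ee
  rw [mul_sub, e1, e2]; ring

lemma pot_id {r : ℝ} (hr : 1 < r) (n Δ : ℕ) (k : ℕ) :
    (r + 1) * pot r n Δ (k + 1) - r * pot r n Δ (k + 2) - pot r n Δ k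
      = (n : ℝ) * Δ * r := by
  have h := ee_rec hr n k
  unfold pot
  rw [Finset.sum_range_succ (n := k + 1), Finset.sum_range_succ (n := k)]
  linear_combination (-(n : ℝ) * Δ) * h

lemma pot_one {r : ℝ} (n Δ : ℕ) : pot r n Δ 1 = (n : ℝ) ^ 2 * Δ := by
  simp [pot, ee]; ring

lemma pot_zero {r : ℝ} (n Δ : ℕ) : pot r n Δ 0 = 0 := by simp [pot]

lemma pot_n_nonneg {r : ℝ} (hr : 1 < r) (n Δ : ℕ) : 0 ≤ pot r n Δ n := by
  have hρ : (0:ℝ) ≤ r⁻¹ := by positivity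
  have hsum : 0 ≤ ∑ j ∈ range n, ee r n j := by
    unfold ee
    rw [Finset.sum_sub_distrib, ← Finset.mul_sum]
    have h1 : ∑ j ∈ range n, ∑ i ∈ range j, r⁻¹ ^ i
        ≤ ∑ j ∈ range n, ∑ i ∈ range n, r⁻¹ ^ i := by
      refine Finset.sum_le_sum fun j hj => ?_
      refine Finset.sum_le_sum_of_subset_of_nonneg
        (Finset.range_subset_range.2 (le_of_lt (Finset.mem_range.1 hj))) ?_
      intros; positivity
    have h2 : ∑ j ∈ range n, ∑ i ∈ range n, r⁻¹ ^ i
        = (n : ℝ) * ∑ i ∈ range n, r⁻¹ ^ i := by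
      rw [Finset.sum_const, Finset.card_range, nsmul_eq_mul]
    linarith
  have : (0:ℝ) ≤ (n : ℝ) * Δ := by positivity
  exact mul_nonneg this hsum

lemma exists_cross {V : Type*} (E : V → V → Prop) (S : Finset V) {a b : V}
    (ha : a ∈ S) (hb : b ∉ S) (h : Relation.ReflTransGen E a b) :
    ∃ u v, u ∈ S ∧ v ∉ S ∧ E u v := by
  induction h with
  | refl => exact absurd ha hb
  | @tail b c hab hbc ih =>
    by_cases hbS : b ∈ S
    · exact ⟨b, c, hbS, hb, hbc⟩
    · exact ih hbS

lemma cross_edge {V : Type*} [Fintype V] [DecidableEq V]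
    (E : V → V → Prop) (hstrong : ∀ u v : V, Relation.ReflTransGen E u v)
    {S : Finset V} (hne : S ≠ ∅) (hnu : S ≠ univ) :
    ∃ u v, u ∈ S ∧ v ∉ S ∧ E u v := by
  obtain ⟨a, ha⟩ := Finset.nonempty_iff_ne_empty.2 hne
  obtain ⟨b, hb⟩ : ∃ b, b ∉ S := by
    by_contra hco; push_neg at hco
    exact hnu (Finset.eq_univ_iff_forall.2 hco)
  exact exists_cross E S ha hb (hstrong a b)

lemma moranP_pos {V : Type*} [Fintype V] [DecidableEq V] [Nonempty V]
    (E : V → V → Prop) [DecidableRel E] {r : ℝ} (hr : 1 < r) {Δ : ℕ} (hΔ : 1 ≤ Δ)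
    (hout : ∀ v : V, (univ.filter (fun w => E v w)).card = Δ)
    (hstrong : ∀ u v : V, Relation.ReflTransGen E u v)
    {S : Finset V} (hne : S ≠ ∅) (hnu : S ≠ univ) :
    ∃ v, v ∉ S ∧ 0 < moranP E r S (insert v S) := by
  obtain ⟨u, v, huS, hvS, hE⟩ := cross_edge E hstrong hne hnu
  refine ⟨v, hvS, ?_⟩
  have hW : (0:ℝ) < (Fintype.card V : ℝ) + (r - 1) * S.card := by
    have h1 : (1:ℝ) ≤ (Fintype.card V : ℝ) := by exact_mod_cast Fintype.card_pos
    have : (0:ℝ) ≤ (r - 1) * S.card := by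
      apply mul_nonneg <;> [linarith; positivity]
    linarith
  have hterm : (0:ℝ) < (if u ∈ S then r else 1) /
      (((Fintype.card V : ℝ) + (r - 1) * S.card) *
        ((univ.filter (fun w => E u w)).card : ℝ)) := by
    rw [if_pos huS, hout u]
    have hΔ' : (0:ℝ) < (Δ:ℝ) := by exact_mod_cast hΔ
    positivity
  -- the (u,v) term of the double sum is positive, everything is nonneg
  have hinner : ∀ u' : V, 0 ≤ ∑ v' ∈ univ.filter (fun v => E u' v),
      (if insert v S = (if u' ∈ S then insert v' S else S.erase v') then
        (if u' ∈ S then r else 1) /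
          (((Fintype.card V : ℝ) + (r - 1) * S.card) *
            ((univ.filter (fun w => E u' w)).card : ℝ))
      else 0) := by
    intro u'
    refine Finset.sum_nonneg fun v' _ => ?_
    have hd : (0:ℝ) ≤ ((Fintype.card V : ℝ) + (r - 1) * S.card) *
        ((univ.filter (fun w => E u' w)).card : ℝ) :=
      mul_nonneg (le_of_lt hW) (Nat.cast_nonneg _)
    split_ifs
    all_goals first
      | exact le_refl 0
      | exact div_nonneg (by linarith) hd
  have hvmem : v ∈ univ.filter (fun v' => E u v') := by
    simp [hE]
  unfold moranP
  refine lt_of_lt_of_le ?_ (Finset.single_le_sum (fun u' _ => hinner u') (mem_univ u))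
  simp only [huS, if_true]
  have hd : (0:ℝ) ≤ ((Fintype.card V : ℝ) + (r - 1) * S.card) *
      ((univ.filter (fun w => E u w)).card : ℝ) :=
    mul_nonneg (le_of_lt hW) (Nat.cast_nonneg _)
  refine lt_of_lt_of_le ?_ (Finset.single_le_sum (fun v' _ => ?_) hvmem)
  · rw [if_pos rfl, hout u]
    have hΔ' : (0:ℝ) < (Δ:ℝ) := by exact_mod_cast hΔ
    exact div_pos (by linarith) (mul_pos hW hΔ')
  · split_ifs
    · exact div_nonneg (by linarith) hd
    · exact le_refl 0

lemma drift {V : Type*} [Fintype V] [DecidableEq V] [Nonempty V]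
    (E : V → V → Prop) [DecidableRel E] {Δ : ℕ} (hΔ : 1 ≤ Δ)
    (hout : ∀ v : V, (univ.filter (fun w => E v w)).card = Δ)
    (hin : ∀ v : V, (univ.filter (fun w => E w v)).card = Δ)
    (hstrong : ∀ u v : V, Relation.ReflTransGen E u v)
    {r : ℝ} (hr : 1 < r) {n : ℕ} (hn : n = Fintype.card V)
    {S : Finset V} (hne : S ≠ ∅) (hnu : S ≠ univ) :
    1 + ∑ S' : Finset V, moranP E r S S' * pot r n Δ S'.card
      ≤ pot r n Δ S.card := by
  have hcard0 : S.card ≠ 0 := fun h => hne (Finset.card_eq_zero.1 h)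
  obtain ⟨k', hk⟩ : ∃ k', S.card = k' + 1 := ⟨S.card - 1, by omega⟩
  set W : ℝ := (Fintype.card V : ℝ) + (r - 1) * S.card with hWdef
  have hW : (0:ℝ) < W := by
    have h1 : (1:ℝ) ≤ (Fintype.card V : ℝ) := by exact_mod_cast Fintype.card_pos
    have : (0:ℝ) ≤ (r - 1) * S.card := by
      apply mul_nonneg <;> [linarith; positivity]
    rw [hWdef]; linarith
  have hΔR : (0:ℝ) < (Δ:ℝ) := by exact_mod_cast hΔ
  have hWΔ0 : W * (Δ:ℝ) ≠ 0 := ne_of_gt (mul_pos hW hΔR)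
  -- inner counts
  set a : V → ℕ := fun u => ((univ.filter (fun v => E u v)).filter (fun v => v ∈ S)).card with hadef
  set b : V → ℕ := fun u => ((univ.filter (fun v => E u v)).filter (fun v => ¬ v ∈ S)).card with hbdef
  have hab : ∀ u, a u + b u = Δ := by
    intro u
    rw [hadef, hbdef]
    simp only
    rw [Finset.card_filter_add_card_filter_not]
    exact hout u
  -- evaluate the sum
  have heval := moranP_sum_eval E r S (fun S' => pot r n Δ S'.card)
  -- inner sums
  have hinS : ∀ u ∈ S,
      (∑ v ∈ univ.filter (fun v => E u v),
        ((if u ∈ S then r else 1) / (W * ((univ.filter (fun w => E u w)).card : ℝ)))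
          * pot r n Δ ((if u ∈ S then insert v S else S.erase v).card))
      = (a u : ℝ) * (r / (W * Δ) * pot r n Δ (k' + 1))
        + (b u : ℝ) * (r / (W * Δ) * pot r n Δ (k' + 2)) := by
    intro u huS
    simp only [huS, if_true, hout u]
    rw [← Finset.sum_filter_add_sum_filter_not (univ.filter (fun v => E u v))
      (fun v => v ∈ S)]
    congr 1
    · rw [Finset.sum_congr rfl (fun v hv => by
        rw [Finset.insert_eq_self.2 (Finset.mem_filter.1 hv).2, hk]),
        Finset.sum_const, nsmul_eq_mul]
    · rw [Finset.sum_congr rfl (fun v hv => by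
        rw [Finset.card_insert_of_notMem (Finset.mem_filter.1 hv).2, hk]),
        Finset.sum_const, nsmul_eq_mul]
  have hninS : ∀ u, u ∉ S →
      (∑ v ∈ univ.filter (fun v => E u v),
        ((if u ∈ S then r else 1) / (W * ((univ.filter (fun w => E u w)).card : ℝ)))
          * pot r n Δ ((if u ∈ S then insert v S else S.erase v).card))
      = (a u : ℝ) * (1 / (W * Δ) * pot r n Δ k')
        + (b u : ℝ) * (1 / (W * Δ) * pot r n Δ (k' + 1)) := by
    intro u huS
    simp only [huS, if_false, hout u]
    rw [← Finset.sum_filter_add_sum_filter_not (univ.filter (fun v => E u v))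
      (fun v => v ∈ S)]
    congr 1
    · rw [Finset.sum_congr rfl (fun v hv => by
        rw [Finset.card_erase_of_mem (Finset.mem_filter.1 hv).2, hk, Nat.succ_sub_one]),
        Finset.sum_const, nsmul_eq_mul]
    · rw [Finset.sum_congr rfl (fun v hv => by
        rw [Finset.erase_eq_of_notMem (Finset.mem_filter.1 hv).2, hk]),
        Finset.sum_const, nsmul_eq_mul]
  -- split the outer sum
  set A : ℝ := ∑ u ∈ univ.filter (fun u => u ∈ S), (a u : ℝ) with hAdef
  set B : ℝ := ∑ u ∈ univ.filter (fun u => u ∈ S), (b u : ℝ) with hBdef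
  set C : ℝ := ∑ u ∈ univ.filter (fun u => ¬ u ∈ S), (a u : ℝ) with hCdef
  set D : ℝ := ∑ u ∈ univ.filter (fun u => ¬ u ∈ S), (b u : ℝ) with hDdef
  have hfS : univ.filter (fun u => u ∈ S) = S := by ext x; simp
  have htot : ∑ S' : Finset V, moranP E r S S' * pot r n Δ S'.card
      = A * (r / (W * Δ) * pot r n Δ (k' + 1))
        + B * (r / (W * Δ) * pot r n Δ (k' + 2))
        + (C * (1 / (W * Δ) * pot r n Δ k')
        + D * (1 / (W * Δ) * pot r n Δ (k' + 1))) := by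
    rw [heval, ← Finset.sum_filter_add_sum_filter_not univ (fun u => u ∈ S)]
    congr 1
    · rw [Finset.sum_congr rfl (fun u hu => hinS u (Finset.mem_filter.1 hu).2),
        Finset.sum_add_distrib, ← Finset.sum_mul, ← Finset.sum_mul]
    · rw [Finset.sum_congr rfl (fun u hu => hninS u (Finset.mem_filter.1 hu).2),
        Finset.sum_add_distrib, ← Finset.sum_mul, ← Finset.sum_mul]
  -- counting identities
  have hcast : ∀ u, ((a u : ℝ) + (b u : ℝ)) = (Δ : ℝ) := fun u => by
    rw [← Nat.cast_add, hab u]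
  have hABn : A + B = (S.card : ℝ) * Δ := by
    rw [hAdef, hBdef, ← Finset.sum_add_distrib,
      Finset.sum_congr rfl fun u _ => hcast u, Finset.sum_const, nsmul_eq_mul, hfS]
  have hall : A + B + (C + D) = (Fintype.card V : ℝ) * Δ := by
    rw [hAdef, hBdef, hCdef, hDdef, ← Finset.sum_add_distrib, ← Finset.sum_add_distrib,
      Finset.sum_filter_add_sum_filter_not,
      Finset.sum_congr rfl fun (u : V) _ => hcast u, Finset.sum_const, nsmul_eq_mul,
      Finset.card_univ]
  have hACn : A + C = (S.card : ℝ) * Δ := by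
    rw [hAdef, hCdef, Finset.sum_filter_add_sum_filter_not, ← Nat.cast_sum,
      double_count E S, Finset.sum_congr rfl fun v _ => hin v, Finset.sum_const,
      smul_eq_mul]
    push_cast; ring
  obtain ⟨u₀, v₀, hu₀, hv₀, hE₀⟩ := cross_edge E hstrong hne hnu
  have hbu₀ : (1:ℝ) ≤ (b u₀ : ℝ) := by
    have h0 : 0 < b u₀ := by
      rw [hbdef]
      exact Finset.card_pos.2 ⟨v₀, by simp [hE₀, hv₀]⟩
    exact_mod_cast h0
  have hB1 : (1:ℝ) ≤ B :=
    le_trans hbu₀ (Finset.single_le_sum (f := fun u => (b u : ℝ))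
      (fun u _ => Nat.cast_nonneg _) (Finset.mem_filter.2 ⟨mem_univ _, hu₀⟩))
  have hC : C = B := by linarith
  have hWΔeq : W * (Δ:ℝ) = r * A + r * B + B + D := by
    rw [hWdef]
    linear_combination (-1 : ℝ) * hall + (1 - r) * hABn + hC
  have hpot := pot_id hr n Δ k'
  have hx : A * (r / (W * Δ) * pot r n Δ (k' + 1))
      + B * (r / (W * Δ) * pot r n Δ (k' + 2))
      + (C * (1 / (W * Δ) * pot r n Δ k')
      + D * (1 / (W * Δ) * pot r n Δ (k' + 1)))
      = (r * A * pot r n Δ (k' + 1) + r * B * pot r n Δ (k' + 2)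
          + C * pot r n Δ k' + D * pot r n Δ (k' + 1)) / (W * Δ) := by
    field_simp
    ring
  have hy : r * A * pot r n Δ (k' + 1) + r * B * pot r n Δ (k' + 2)
      + C * pot r n Δ k' + D * pot r n Δ (k' + 1)
      = W * Δ * pot r n Δ (k' + 1) - B * ((n:ℝ) * Δ * r) := by
    linear_combination (-(pot r n Δ (k' + 1))) * hWΔeq + (-B) * hpot
      + (pot r n Δ k') * hC
  have hz : (W * (Δ:ℝ) * pot r n Δ (k' + 1) - B * ((n:ℝ) * Δ * r)) / (W * Δ)
      = pot r n Δ (k' + 1) - B * ((n:ℝ) * Δ * r) / (W * Δ) := by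
    rw [sub_div, mul_comm (W * (Δ:ℝ)) (pot r n Δ (k' + 1)), mul_div_assoc,
      div_self hWΔ0, mul_one]
  -- the drift is at least 1
  have hKn : (S.card : ℝ) ≤ (n : ℝ) := by
    have := Finset.card_le_univ S
    rw [← hn] at this
    exact_mod_cast this
  have hWle : W ≤ r * (n : ℝ) := by
    have h1 : (r - 1) * (S.card : ℝ) ≤ (r - 1) * (n : ℝ) :=
      mul_le_mul_of_nonneg_left hKn (by linarith)
    rw [hWdef, ← hn]
    linarith
  have h6 : (0:ℝ) ≤ (n:ℝ) * Δ * r := by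
    apply mul_nonneg (mul_nonneg (Nat.cast_nonneg _) (Nat.cast_nonneg _)); linarith
  have h7 : (n:ℝ) * Δ * r ≤ B * ((n:ℝ) * Δ * r) := le_mul_of_one_le_left h6 hB1
  have h8 : W * Δ ≤ B * ((n:ℝ) * Δ * r) := by
    have h9 : W * (Δ:ℝ) ≤ r * (n:ℝ) * Δ := mul_le_mul_of_nonneg_right hWle hΔR.le
    linarith
  have hQ : 1 ≤ B * ((n:ℝ) * Δ * r) / (W * Δ) :=
    (one_le_div (mul_pos hW hΔR)).2 h8
  have hfinal : ∑ S' : Finset V, moranP E r S S' * pot r n Δ S'.card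
      = pot r n Δ (k' + 1) - B * ((n:ℝ) * Δ * r) / (W * Δ) := by
    rw [htot, hx, hy, hz]
  rw [hfinal, hk]
  linarith

/-- The expected absorption time of the Moran process with mutant fitness
`r > 1` on a strongly connected `Δ`-regular `n`-vertex digraph, started from a
uniformly random single mutant, is at most `n²Δ`.  Here `T` is the
expected-absorption-time function, characterized as the solution of the
one-step recurrence. -/
theorem stmt_10 {V : Type*} [Fintype V] [DecidableEq V] [Nonempty V]
    (E : V → V → Prop) [DecidableRel E]
    (Δ : ℕ) (hΔ : 1 ≤ Δ)
    (hout : ∀ v : V, (univ.filter (fun w => E v w)).card = Δ)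
    (hin : ∀ v : V, (univ.filter (fun w => E w v)).card = Δ)
    (hstrong : ∀ u v : V, Relation.ReflTransGen E u v)
    (r : ℝ) (hr : 1 < r)
    (n : ℕ) (hn : n = Fintype.card V) (hn2 : 2 ≤ n)
    (T : Finset V → ℝ)
    (hT0 : T ∅ = 0) (hTn : T univ = 0)
    (hTrec : ∀ S : Finset V, S ≠ ∅ → S ≠ univ →
      T S = 1 + ∑ S' : Finset V, moranP E r S S' * T S') :
    (1 / (n : ℝ)) * ∑ v : V, T {v} ≤ (n : ℝ) ^ 2 * (Δ : ℝ) := by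
  set f : Finset V → ℝ := fun S => pot r n Δ S.card with hfdef
  -- T is dominated by the supersolution f
  have habs : ∀ S : Finset V, T S ≤ f S := by
    by_contra hcon
    push_neg at hcon
    obtain ⟨S₁, hS₁⟩ := hcon
    set h : Finset V → ℝ := fun S => T S - f S with hhdef
    obtain ⟨Smax, -, hmax'⟩ := Finset.exists_max_image (univ : Finset (Finset V)) h
      ⟨S₁, mem_univ _⟩
    set M : ℝ := h Smax with hMdef
    have hmax : ∀ S : Finset V, h S ≤ M := fun S => hmax' S (mem_univ S)
    have hMpos : 0 < M := lt_of_lt_of_le (sub_pos.2 hS₁) (hmax S₁)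
    obtain ⟨S₀, hS₀A, hcard⟩ := Finset.exists_max_image
      (univ.filter (fun S : Finset V => h S = M)) (fun S => S.card)
      ⟨Smax, by simp [hMdef]⟩
    have hS₀ : h S₀ = M := (Finset.mem_filter.1 hS₀A).2
    have hS₀ne : S₀ ≠ ∅ := by
      intro h0
      rw [h0] at hS₀
      have : h ∅ = 0 - pot r n Δ 0 := by simp [hhdef, hfdef, hT0]
      rw [pot_zero, sub_zero] at this
      rw [this] at hS₀
      linarith
    have hS₀nu : S₀ ≠ univ := by
      intro h0
      rw [h0] at hS₀
      have hu : h univ = 0 - pot r n Δ n := by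
        simp [hhdef, hfdef, hTn, Finset.card_univ, ← hn]
      have := pot_n_nonneg hr n Δ
      rw [hu] at hS₀
      linarith
    have hrec := hTrec S₀ hS₀ne hS₀nu
    have hd := drift E hΔ hout hin hstrong hr hn hS₀ne hS₀nu
    have hsub : M ≤ ∑ S' : Finset V, moranP E r S₀ S' * h S' := by
      have hsplit : ∑ S' : Finset V, moranP E r S₀ S' * h S'
          = (∑ S' : Finset V, moranP E r S₀ S' * T S')
            - ∑ S' : Finset V, moranP E r S₀ S' * f S' := by
        rw [← Finset.sum_sub_distrib]
        exact Finset.sum_congr rfl fun S' _ => by rw [hhdef]; ring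
      rw [hsplit, ← hS₀]
      simp only [hhdef, hfdef]
      have : T S₀ = 1 + ∑ S' : Finset V, moranP E r S₀ S' * T S' := hrec
      linarith
    obtain ⟨v, hvS, hPv⟩ := moranP_pos E hr hΔ hout hstrong hS₀ne hS₀nu
    have hvM : h (insert v S₀) = M := by
      by_contra hne'
      have hlt : h (insert v S₀) < M := lt_of_le_of_ne (hmax _) hne'
      have hb : ∑ S' : Finset V, moranP E r S₀ S' * h S' < M := by
        have hlt2 : ∑ S' : Finset V, moranP E r S₀ S' * h S'
            < ∑ S' : Finset V, moranP E r S₀ S' * M := by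
          refine Finset.sum_lt_sum (fun S' _ =>
            mul_le_mul_of_nonneg_left (hmax S') (moranP_nonneg E hr S₀ S'))
            ⟨insert v S₀, mem_univ _, ?_⟩
          exact mul_lt_mul_of_pos_left hlt hPv
        have heq1 : ∑ S' : Finset V, moranP E r S₀ S' * M
            = (∑ S' : Finset V, moranP E r S₀ S') * M := by
          rw [Finset.sum_mul]
        rw [heq1, moranP_sum_one E hr hΔ hout S₀, one_mul] at hlt2
        exact hlt2
      linarith
    have hins : (insert v S₀).card = S₀.card + 1 := Finset.card_insert_of_notMem hvS
    have := hcard (insert v S₀) (Finset.mem_filter.2 ⟨mem_univ _, hvM⟩)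
    omega
  -- conclude
  have hone : ∀ v : V, T {v} ≤ (n:ℝ) ^ 2 * Δ := by
    intro v
    have h1 := habs {v}
    have h2 : f {v} = (n:ℝ) ^ 2 * Δ := by
      rw [hfdef]
      simp only [Finset.card_singleton]
      exact pot_one n Δ
    linarith
  have hsum : ∑ v : V, T {v} ≤ (n:ℝ) * ((n:ℝ) ^ 2 * Δ) := by
    calc ∑ v : V, T {v} ≤ ∑ _v : V, (n:ℝ) ^ 2 * Δ :=
          Finset.sum_le_sum fun v _ => hone v
      _ = (Fintype.card V : ℝ) * ((n:ℝ) ^ 2 * Δ) := by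
          rw [Finset.sum_const, Finset.card_univ, nsmul_eq_mul]
      _ = (n:ℝ) * ((n:ℝ) ^ 2 * Δ) := by rw [← hn]
  have hn0 : (0:ℝ) < (n:ℝ) := by exact_mod_cast (by omega : 0 < n)
  have := mul_le_mul_of_nonneg_left hsum (le_of_lt (one_div_pos.2 hn0))
  calc (1 / (n : ℝ)) * ∑ v : V, T {v}
      ≤ (1 / (n:ℝ)) * ((n:ℝ) * ((n:ℝ) ^ 2 * Δ)) := this
    _ = (n:ℝ) ^ 2 * Δ := by field_simp
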